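/- In the scalar Hegselmann–Krause model, every agent's state x_i(t) converges to a limit x_i* as t → ∞, and the limits satisfy: for each pair i, j, either x_i* = x_j* or |x_i* - x_j*| > ρ. -/
import Mathlib

open Filter Finset

open scoped Classical

/-- One step of the Hegselmann–Krause dynamics with confidence bound `ρ`:
each agent moves to the average of the opinions within distance `ρ`. -/
noncomputable def hkUpdate (n : ℕ) (ρ : ℝ) (x : Fin n → ℝ) : Fin n → ℝ := fun i =>
  (∑ j ∈ Finset.univ.filter (fun j => |x j - x i| ≤ ρ), x j) /
    ((Finset.univ.filter (fun j => |x j - x i| ≤ ρ)).card : ℝ)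

namespace HK

variable {n : ℕ} {ρ : ℝ}

noncomputable def nbr (ρ : ℝ) (z : Fin n → ℝ) (i : Fin n) : Finset (Fin n) :=
  Finset.univ.filter (fun j => |z j - z i| ≤ ρ)

lemma mem_nbr {z : Fin n → ℝ} {i j : Fin n} : j ∈ nbr ρ z i ↔ |z j - z i| ≤ ρ := by
  simp [nbr]

lemma hkUpdate_eq (z : Fin n → ℝ) (i : Fin n) :
    hkUpdate n ρ z i = (∑ j ∈ nbr ρ z i, z j) / ((nbr ρ z i).card : ℝ) := rfl

lemma self_mem_nbr (hρ : 0 ≤ ρ) (z : Fin n → ℝ) (i : Fin n) : i ∈ nbr ρ z i := by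
  simp [mem_nbr, hρ]

lemma nbr_card_pos (hρ : 0 ≤ ρ) (z : Fin n → ℝ) (i : Fin n) : 0 < (nbr ρ z i).card :=
  Finset.card_pos.mpr ⟨i, self_mem_nbr hρ z i⟩

lemma hkUpdate_le (hρ : 0 ≤ ρ) {z : Fin n → ℝ} {i : Fin n} {b : ℝ}
    (h : ∀ j ∈ nbr ρ z i, z j ≤ b) : hkUpdate n ρ z i ≤ b := by
  rw [hkUpdate_eq]
  have hc : (0:ℝ) < ((nbr ρ z i).card : ℝ) := by exact_mod_cast nbr_card_pos hρ z i
  rw [div_le_iff₀ hc]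
  calc ∑ j ∈ nbr ρ z i, z j ≤ ∑ _j ∈ nbr ρ z i, b := Finset.sum_le_sum h
    _ = b * ((nbr ρ z i).card : ℝ) := by rw [Finset.sum_const, nsmul_eq_mul, mul_comm]

lemma le_hkUpdate (hρ : 0 ≤ ρ) {z : Fin n → ℝ} {i : Fin n} {b : ℝ}
    (h : ∀ j ∈ nbr ρ z i, b ≤ z j) : b ≤ hkUpdate n ρ z i := by
  rw [hkUpdate_eq]
  have hc : (0:ℝ) < ((nbr ρ z i).card : ℝ) := by exact_mod_cast nbr_card_pos hρ z i
  rw [le_div_iff₀ hc]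
  calc b * ((nbr ρ z i).card : ℝ) = ∑ _j ∈ nbr ρ z i, b := by
        rw [Finset.sum_const, nsmul_eq_mul, mul_comm]
    _ ≤ ∑ j ∈ nbr ρ z i, z j := Finset.sum_le_sum h

lemma cross_sum {ι : Type*} (A C : Finset ι) (f : ι → ℝ)
    (h : ∀ a ∈ A, ∀ c ∈ C, f a ≤ f c) :
    (∑ a ∈ A, f a) * (C.card : ℝ) ≤ (A.card : ℝ) * (∑ c ∈ C, f c) := by
  have h1 : (∑ a ∈ A, f a) * (C.card : ℝ) = ∑ a ∈ A, ∑ _c ∈ C, f a := by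
    simp only [Finset.sum_const, nsmul_eq_mul, Finset.sum_mul]
    exact Finset.sum_congr rfl (fun a _ => mul_comm _ _)
  have h2 : (A.card : ℝ) * (∑ c ∈ C, f c) = ∑ _a ∈ A, ∑ c ∈ C, f c := by
    simp [Finset.sum_const, nsmul_eq_mul]
  rw [h1, h2]
  exact Finset.sum_le_sum (fun a ha => Finset.sum_le_sum (fun c hc => h a ha c hc))

lemma mean_le_mean {ι : Type*} {S T : Finset ι} {f : ι → ℝ}
    (hS : S.Nonempty) (hT : T.Nonempty)
    (h1 : ∀ a ∈ S, a ∉ T → ∀ b ∈ T, f a ≤ f b)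
    (h2 : ∀ a ∈ S, ∀ b ∈ T, b ∉ S → f a ≤ f b) :
    (∑ a ∈ S, f a) / (S.card : ℝ) ≤ (∑ b ∈ T, f b) / (T.card : ℝ) := by
  have hSc : (0:ℝ) < (S.card : ℝ) := by exact_mod_cast Finset.card_pos.mpr hS
  have hTc : (0:ℝ) < (T.card : ℝ) := by exact_mod_cast Finset.card_pos.mpr hT
  rw [div_le_div_iff₀ hSc hTc]
  -- decompose
  have hSu : S \ T ∪ S ∩ T = S := Finset.sdiff_union_inter S T
  have hTu : T \ S ∪ T ∩ S = T := Finset.sdiff_union_inter T S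
  have hSdecomp : ∑ a ∈ S, f a = (∑ a ∈ S \ T, f a) + (∑ a ∈ S ∩ T, f a) := by
    rw [← Finset.sum_union (Finset.disjoint_sdiff_inter S T), hSu]
  have hTdecomp : ∑ a ∈ T, f a = (∑ a ∈ T \ S, f a) + (∑ a ∈ T ∩ S, f a) := by
    rw [← Finset.sum_union (Finset.disjoint_sdiff_inter T S), hTu]
  have hScard : (S.card : ℝ) = ((S \ T).card : ℝ) + ((S ∩ T).card : ℝ) := by
    rw [← Nat.cast_add, ← Finset.card_union_of_disjoint (Finset.disjoint_sdiff_inter S T), hSu]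
  have hTcard : (T.card : ℝ) = ((T \ S).card : ℝ) + ((T ∩ S).card : ℝ) := by
    rw [← Nat.cast_add, ← Finset.card_union_of_disjoint (Finset.disjoint_sdiff_inter T S), hTu]
  set A := S \ T
  set B := T \ S
  set C := S ∩ T
  have hCTS : T ∩ S = C := Finset.inter_comm T S
  rw [hSdecomp, hTdecomp, hScard, hTcard, hCTS]
  set sA := ∑ a ∈ A, f a
  set sB := ∑ a ∈ B, f a
  set sC := ∑ a ∈ C, f a
  -- three cross inequalities
  have hAC : sA * (C.card : ℝ) ≤ (A.card : ℝ) * sC :=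
    cross_sum A C f (fun a ha c hc => h1 a (Finset.mem_sdiff.mp ha).1
      (Finset.mem_sdiff.mp ha).2 c (Finset.mem_of_mem_inter_right hc))
  have hAB : sA * (B.card : ℝ) ≤ (A.card : ℝ) * sB :=
    cross_sum A B f (fun a ha b hb => h2 a (Finset.mem_sdiff.mp ha).1
      b (Finset.mem_sdiff.mp hb).1 (Finset.mem_sdiff.mp hb).2)
  have hCB : sC * (B.card : ℝ) ≤ (C.card : ℝ) * sB :=
    cross_sum C B f (fun c hc b hb => h2 c (Finset.mem_of_mem_inter_left hc)
      b (Finset.mem_sdiff.mp hb).1 (Finset.mem_sdiff.mp hb).2)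
  nlinarith [hAC, hAB, hCB]


lemma hkUpdate_mono_pt (hρ : 0 ≤ ρ) {z : Fin n → ℝ} {i i' : Fin n} (h : z i ≤ z i') :
    hkUpdate n ρ z i ≤ hkUpdate n ρ z i' := by
  rw [hkUpdate_eq, hkUpdate_eq]
  apply mean_le_mean ⟨i, self_mem_nbr hρ z i⟩ ⟨i', self_mem_nbr hρ z i'⟩
  · intro a haS haT b hb
    rw [mem_nbr, abs_le] at haS hb
    rw [mem_nbr, abs_le, not_and_or] at haT
    rcases haT with hlt | hgt
    · push_neg at hlt
      linarith [hb.1]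
    · push_neg at hgt
      linarith [haS.2]
  · intro a ha b hbT hbS
    rw [mem_nbr, abs_le] at hbT ha
    rw [mem_nbr, abs_le, not_and_or] at hbS
    rcases hbS with hlt | hgt
    · push_neg at hlt
      linarith [hbT.1]
    · push_neg at hgt
      linarith [ha.2]

lemma hkUpdate_monotone (hρ : 0 ≤ ρ) {z : Fin n → ℝ} (hz : Monotone z) :
    Monotone (hkUpdate n ρ z) :=
  fun _i _i' hii' => hkUpdate_mono_pt hρ (hz hii')

lemma hkUpdate_comp_perm (z : Fin n → ℝ) (σ : Equiv.Perm (Fin n)) :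
    hkUpdate n ρ (z ∘ σ) = (hkUpdate n ρ z) ∘ σ := by
  funext i
  show (∑ j ∈ nbr ρ (z ∘ σ) i, (z ∘ σ) j) / ((nbr ρ (z ∘ σ) i).card : ℝ)
      = (∑ j ∈ nbr ρ z (σ i), z j) / ((nbr ρ z (σ i)).card : ℝ)
  have hset : nbr ρ (z ∘ σ) i = (nbr ρ z (σ i)).map σ.symm.toEmbedding := by
    ext j
    simp only [nbr, Finset.mem_map, Finset.mem_filter, Finset.mem_univ, true_and,
      Equiv.coe_toEmbedding, Function.comp_apply]
    constructor
    · intro hj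
      exact ⟨σ j, hj, σ.symm_apply_apply j⟩
    · rintro ⟨a, ha, rfl⟩
      simpa using ha
  rw [hset, Finset.sum_map, Finset.card_map]
  congr 1
  exact Finset.sum_congr rfl (fun a _ => by simp)

lemma upper_bound (hρ : 0 ≤ ρ) (y : ℕ → Fin n → ℝ)
    (hupd : ∀ t, y (t + 1) = hkUpdate n ρ (y t)) {M : ℝ} (h0 : ∀ j, y 0 j ≤ M) :
    ∀ t j, y t j ≤ M := by
  intro t
  induction t with
  | zero => exact h0
  | succ t ih =>
    intro j
    rw [hupd t]
    exact hkUpdate_le hρ (fun j' _ => ih j')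


theorem conv_aux {n : ℕ} {ρ : ℝ} (hρ : 0 < ρ) (y : ℕ → Fin n → ℝ)
    (hupd : ∀ t, y (t + 1) = hkUpdate n ρ (y t)) (hmono : ∀ t, Monotone (y t))
    {M : ℝ} (hM : ∀ t j, y t j ≤ M) :
    ∀ k, ∀ hk : k < n, ∃ L : ℕ → ℝ,
      (∀ j, ∀ hj : j ≤ k, Tendsto (fun t => y t ⟨j, by omega⟩) atTop (nhds (L j))) ∧
      (∀ j, ∀ hj : j + 1 ≤ k, L (j + 1) = L j ∨
        (ρ < L (j + 1) - L j ∧ ∃ T, ∀ t, T ≤ t →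
          ρ < y t ⟨j + 1, by omega⟩ - y t ⟨j, by omega⟩)) := by
  intro k
  induction k with
  | zero =>
    intro hk
    have hm : Monotone (fun t => y t ⟨0, hk⟩) := by
      apply monotone_nat_of_le_succ
      intro t
      rw [hupd t]
      exact le_hkUpdate hρ.le (fun j _ => hmono t (by simp [Fin.le_def]))
    have hbdd : BddAbove (Set.range fun t => y t ⟨0, hk⟩) := by
      refine ⟨M, ?_⟩
      rintro z ⟨t, rfl⟩
      exact hM t _
    refine ⟨fun _ => ⨆ t, y t ⟨0, hk⟩, ?_, ?_⟩
    · intro j hj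
      obtain rfl := Nat.le_zero.mp hj
      exact tendsto_atTop_ciSup hm hbdd
    · intro j hj
      omega
  | succ k ih =>
    intro hk1
    obtain ⟨L, hL1, hL2⟩ := ih (by omega)
    set K : Fin n := ⟨k, by omega⟩ with hKdef
    set K1 : Fin n := ⟨k + 1, hk1⟩ with hK1def
    have hKK1 : K ≤ K1 := by simp [Fin.le_def, hKdef, hK1def]
    by_cases hcase : ∃ t0, ρ < y t0 K1 - y t0 K
    · -- case b : permanent separation
      obtain ⟨t0, ht0⟩ := hcase
      have step : ∀ t, ρ < y t K1 - y t K →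
          y (t + 1) K ≤ y t K ∧ y t K1 ≤ y (t + 1) K1 := by
        intro t hgap
        constructor
        · rw [hupd t]
          apply hkUpdate_le hρ.le
          intro j hj
          by_contra hlt
          push_neg at hlt
          have hjk : k + 1 ≤ j.val := by
            by_contra hjk
            push_neg at hjk
            exact absurd (hmono t (show j ≤ K by simp [Fin.le_def, hKdef]; omega)) (by linarith)
          have h1 : y t K1 ≤ y t j := hmono t (by simp [Fin.le_def, hK1def]; omega)
          have h2 : |y t j - y t K| ≤ ρ := mem_nbr.mp hj
          rw [abs_le] at h2
          linarith [h2.2]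
        · rw [hupd t]
          apply le_hkUpdate hρ.le
          intro j hj
          by_contra hlt
          push_neg at hlt
          have hjk : j.val ≤ k := by
            by_contra hjk
            push_neg at hjk
            exact absurd (hmono t (show K1 ≤ j by simp [Fin.le_def, hK1def]; omega)) (by linarith)
          have h1 : y t j ≤ y t K := hmono t (by simp [Fin.le_def, hKdef]; omega)
          have h2 : |y t j - y t K1| ≤ ρ := mem_nbr.mp hj
          rw [abs_le] at h2
          linarith [h2.1]
      have persist : ∀ t, t0 ≤ t →
          (ρ < y t K1 - y t K ∧ y t K ≤ y t0 K ∧ y t0 K1 ≤ y t K1) := by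
        intro t ht
        induction t, ht using Nat.le_induction with
        | base => exact ⟨ht0, le_rfl, le_rfl⟩
        | succ t ht ihp =>
          obtain ⟨hg, hKle, hK1le⟩ := ihp
          obtain ⟨s1, s2⟩ := step t hg
          exact ⟨by linarith, s1.trans hKle, hK1le.trans s2⟩
      set g : ℕ → ℝ := fun s => y (s + t0) K1 with hgdef
      have hgmono : Monotone g := by
        apply monotone_nat_of_le_succ
        intro s
        have h1 := (step (s + t0) (persist (s + t0) (by omega)).1).2
        have he : s + 1 + t0 = s + t0 + 1 := by omega
        simpa [hgdef, he] using h1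
      have hgb : BddAbove (Set.range g) := by
        refine ⟨M, ?_⟩
        rintro z ⟨s, rfl⟩
        exact hM _ _
      have hgl : Tendsto g atTop (nhds (⨆ s, g s)) := tendsto_atTop_ciSup hgmono hgb
      set l : ℝ := ⨆ s, g s with hldef
      have hK1tend : Tendsto (fun t => y t K1) atTop (nhds l) :=
        (tendsto_add_atTop_iff_nat t0).mp hgl
      have hLk : Tendsto (fun t => y t K) atTop (nhds (L k)) := hL1 k le_rfl
      have h1 : y t0 K1 ≤ l := by
        have := hgmono.ge_of_tendsto hgl 0
        simpa [hgdef] using this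
      have h2 : L k ≤ y t0 K := by
        apply le_of_tendsto hLk
        filter_upwards [eventually_ge_atTop t0] with t ht
        exact (persist t ht).2.1
      refine ⟨Function.update L (k + 1) l, ?_, ?_⟩
      · intro j hj
        rcases Nat.lt_or_ge j (k + 1) with h | h
        · rw [Function.update_of_ne (by omega)]
          exact hL1 j (by omega)
        · have hjeq : j = k + 1 := by omega
          subst hjeq
          rw [Function.update_self]
          exact hK1tend
      · intro j hj
        rcases Nat.lt_or_ge (j + 1) (k + 1) with h | h
        · rw [Function.update_of_ne (by omega : j + 1 ≠ k + 1),
            Function.update_of_ne (by omega : j ≠ k + 1)]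
          exact hL2 j (by omega)
        · have hjeq : j = k := by omega
          subst hjeq
          rw [Function.update_self, Function.update_of_ne (by omega : j ≠ j + 1)]
          exact Or.inr ⟨by linarith, t0, fun t ht => (persist t ht).1⟩
    · -- case a : no separation ever, agent k+1 joins the cluster
      push_neg at hcase
      have hLmono : ∀ j j', j ≤ j' → j' ≤ k → L j ≤ L j' := by
        intro j j' hjj' hj'k
        refine le_of_tendsto_of_tendsto' (hL1 j (hjj'.trans hj'k)) (hL1 j' hj'k) ?_
        intro t
        exact hmono t (by simp [Fin.le_def]; omega)
      have hPex : ∃ j, L j = L k := ⟨k, rfl⟩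
      set m := Nat.find hPex with hmdef
      have hm : L m = L k := Nat.find_spec hPex
      have hmk : m ≤ k := Nat.find_le rfl
      have hcluster : ∀ j, m ≤ j → j ≤ k → L j = L k := fun j h1 h2 =>
        le_antisymm (hLmono j k h2 le_rfl) (hm ▸ hLmono m j h1 h2)
      have hsep : ∃ T1, ∀ t, T1 ≤ t → ∀ j : Fin n, j.val < m → ρ < y t K - y t j := by
        rcases Nat.eq_zero_or_pos m with hm0 | hm0
        · exact ⟨0, fun t _ j hj => absurd hj (by omega)⟩
        · have hm1 : m - 1 + 1 ≤ k := by omega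
          rcases hL2 (m - 1) hm1 with heq | ⟨_, T1, hT1⟩
          · exfalso
            have hne : L (m - 1) ≠ L k := Nat.find_min hPex (by omega)
            have : m - 1 + 1 = m := by omega
            rw [this] at heq
            exact hne (heq ▸ hm)
          · refine ⟨T1, fun t ht j hj => ?_⟩
            have hgap := hT1 t ht
            have e1 : y t ⟨m - 1 + 1, by omega⟩ ≤ y t K :=
              hmono t (by simp [Fin.le_def, hKdef]; omega)
            have e2 : y t j ≤ y t ⟨m - 1, by omega⟩ :=
              hmono t (by simp [Fin.le_def]; omega)
            linarith
      obtain ⟨T1, hT1⟩ := hsep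
      have hkn : k < n := by omega
      have htend : Tendsto (fun t => y t K1) atTop (nhds (L k)) := by
        rw [Metric.tendsto_atTop]
        intro ε hε
        set δ : ℝ := ε / (2 * n + 1) with hδdef
        have hδ : 0 < δ := by positivity
        have hunif : ∀ᶠ t in atTop, ∀ j ∈ Finset.Icc m k,
            dist (y t ⟨min j k, by omega⟩) (L k) ≤ δ := by
          rw [Filter.eventually_all_finset]
          intro j hj
          rw [Finset.mem_Icc] at hj
          have hmin : min j k = j := min_eq_left hj.2
          have htd : Tendsto (fun t => y t ⟨min j k, by omega⟩) atTop
              (nhds (L (min j k))) := hL1 (min j k) (min_le_right j k)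
          have hLeq : L (min j k) = L k := by rw [hmin]; exact hcluster j hj.1 hj.2
          rw [hLeq] at htd
          obtain ⟨N, hN⟩ := Metric.tendsto_atTop.mp htd δ hδ
          filter_upwards [eventually_ge_atTop N] with t ht
          exact le_of_lt (hN t ht)
        obtain ⟨N0, hN0⟩ := eventually_atTop.mp hunif
        refine ⟨max N0 T1, fun t ht => ?_⟩
        have htN0 : N0 ≤ t := le_trans (le_max_left _ _) ht
        have htT1 : T1 ≤ t := le_trans (le_max_right _ _) ht
        -- closeness of cluster agents at times t and t+1
        have hclose : ∀ s, N0 ≤ s → ∀ j, m ≤ j → ∀ hjk : j ≤ k,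
            |y s ⟨j, by omega⟩ - L k| ≤ δ := by
          intro s hs j hjm hjk
          have := hN0 s hs j (Finset.mem_Icc.mpr ⟨hjm, hjk⟩)
          rw [Real.dist_eq] at this
          have hmin : min j k = j := min_eq_left hjk
          simpa [hmin] using this
        have hKt : |y t K - L k| ≤ δ := hclose t htN0 k hmk le_rfl
        have hKt1 : |y (t + 1) K - L k| ≤ δ := hclose (t + 1) (by omega) k hmk le_rfl
        have hAll : ∀ j ∈ nbr ρ (y t) K, L k - δ ≤ y t j := by
          intro j hj
          rcases Nat.lt_or_ge j.val m with hjm | hjm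
          · exfalso
            have := hT1 t htT1 j hjm
            have habs := mem_nbr.mp hj
            rw [abs_le] at habs
            linarith [habs.1]
          · rcases le_or_gt j.val k with hjk | hjk
            · have := hclose t htN0 j.val hjm hjk
              rw [abs_le] at this
              have hje : (⟨j.val, by omega⟩ : Fin n) = j := Fin.ext rfl
              rw [hje] at this
              linarith [this.1]
            · have h1 : y t K1 ≤ y t j := hmono t (by simp [Fin.le_def, hK1def]; omega)
              have h2 : y t K ≤ y t K1 := hmono t hKK1
              rw [abs_le] at hKt
              linarith [hKt.1]
        have hK1mem : K1 ∈ nbr ρ (y t) K := by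
          rw [mem_nbr, abs_le]
          exact ⟨by linarith [hmono t hKK1, hρ.le], hcase t⟩
        set c := (nbr ρ (y t) K).card with hcdef
        have hc1 : 1 ≤ c := Finset.card_pos.mpr ⟨K1, hK1mem⟩
        have hcpos : (0:ℝ) < (c : ℝ) := by exact_mod_cast hc1
        have hcn : (c : ℝ) ≤ (n : ℝ) := by
          have := Finset.card_le_univ (nbr ρ (y t) K)
          rw [Fintype.card_fin] at this
          exact_mod_cast this
        have hsum : y t K1 + ((c:ℝ) - 1) * (L k - δ) ≤ ∑ j ∈ nbr ρ (y t) K, y t j := by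
          rw [← Finset.add_sum_erase _ _ hK1mem]
          gcongr
          calc ((c:ℝ) - 1) * (L k - δ)
              = (((nbr ρ (y t) K).erase K1).card : ℝ) * (L k - δ) := by
                rw [Finset.card_erase_of_mem hK1mem]
                congr 1
                rw [Nat.cast_sub hc1]
                norm_num
            _ ≤ ∑ j ∈ (nbr ρ (y t) K).erase K1, y t j := by
                rw [← nsmul_eq_mul]
                exact Finset.card_nsmul_le_sum _ _ _
                  (fun j hj => hAll j (Finset.mem_of_mem_erase hj))
        have hupdK : y (t + 1) K = (∑ j ∈ nbr ρ (y t) K, y t j) / (c : ℝ) := by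
          rw [hupd t]; rfl
        have hsum2 : ∑ j ∈ nbr ρ (y t) K, y t j = (c : ℝ) * y (t + 1) K := by
          rw [hupdK, mul_div_cancel₀]
          exact ne_of_gt hcpos
        have key : y t K1 ≤ (L k - δ) + (c:ℝ) * (y (t + 1) K - (L k - δ)) := by
          have := hsum
          rw [hsum2] at this
          nlinarith
        rw [abs_le] at hKt1
        have hnonneg : 0 ≤ y (t + 1) K - (L k - δ) := by linarith [hKt1.1]
        have hsmall : y (t + 1) K - (L k - δ) ≤ 2 * δ := by linarith [hKt1.2]
        have hprod : (c:ℝ) * (y (t + 1) K - (L k - δ)) ≤ (n:ℝ) * (2 * δ) :=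
          mul_le_mul hcn hsmall hnonneg (by positivity)
        have hupper : y t K1 - L k ≤ 2 * (n:ℝ) * δ := by
          have := key.trans (by linarith : (L k - δ) + (c:ℝ) * (y (t + 1) K - (L k - δ))
            ≤ (L k - δ) + (n:ℝ) * (2 * δ))
          linarith
        have hlower : -(2 * (n:ℝ) * δ) ≤ y t K1 - L k := by
          have h2 : y t K ≤ y t K1 := hmono t hKK1
          rw [abs_le] at hKt
          have hn1 : (1:ℝ) ≤ (n:ℝ) := by
            have : 1 ≤ n := by omega
            exact_mod_cast this
          nlinarith
        rw [Real.dist_eq]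
        have hfin : 2 * (n:ℝ) * δ < ε := by
          rw [hδdef, ← mul_div_assoc]
          rw [div_lt_iff₀ (by positivity : (0:ℝ) < 2 * (n:ℝ) + 1)]
          nlinarith
        calc |y t K1 - L k| ≤ 2 * (n:ℝ) * δ := abs_le.mpr ⟨hlower, hupper⟩
          _ < ε := hfin
      refine ⟨Function.update L (k + 1) (L k), ?_, ?_⟩
      · intro j hj
        rcases Nat.lt_or_ge j (k + 1) with h | h
        · rw [Function.update_of_ne (by omega)]
          exact hL1 j (by omega)
        · have hjeq : j = k + 1 := by omega
          subst hjeq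
          rw [Function.update_self]
          exact htend
      · intro j hj
        rcases Nat.lt_or_ge (j + 1) (k + 1) with h | h
        · rw [Function.update_of_ne (by omega : j + 1 ≠ k + 1),
            Function.update_of_ne (by omega : j ≠ k + 1)]
          exact hL2 j (by omega)
        · have hjeq : j = k := by omega
          subst hjeq
          rw [Function.update_self, Function.update_of_ne (by omega : j ≠ j + 1)]
          exact Or.inl rfl

end HK


/-- Every agent's opinion in the HK model converges, and any two limits are either
equal or more than ρ apart. -/
theorem hk_convergence (n : ℕ) (ρ : ℝ) (hρ : 0 < ρ)
    (x : ℕ → Fin n → ℝ) (hx : ∀ t, x (t + 1) = hkUpdate n ρ (x t)) :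
    ∃ xstar : Fin n → ℝ,
      (∀ i, Tendsto (fun t => x t i) atTop (nhds (xstar i))) ∧
      (∀ i j, xstar i = xstar j ∨ ρ < |xstar i - xstar j|) := by
  rcases Nat.eq_zero_or_pos n with hn | hn
  · subst hn
    exact ⟨fun i => i.elim0, fun i => i.elim0, fun i => i.elim0⟩
  set σ := Tuple.sort (x 0) with hσdef
  set y : ℕ → Fin n → ℝ := fun t => x t ∘ σ with hydef
  have hupd' : ∀ t, y (t + 1) = hkUpdate n ρ (y t) := by
    intro t
    show x (t + 1) ∘ σ = hkUpdate n ρ (x t ∘ σ)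
    rw [hx t, HK.hkUpdate_comp_perm]
  have hmono : ∀ t, Monotone (y t) := by
    intro t
    induction t with
    | zero => exact Tuple.monotone_sort (x 0)
    | succ t ih =>
      rw [hupd' t]
      exact HK.hkUpdate_monotone hρ.le ih
  have hM0 : ∀ j, y 0 j ≤ y 0 ⟨n - 1, by omega⟩ := by
    intro j
    exact hmono 0 (by simp [Fin.le_def]; omega)
  have hM : ∀ t j, y t j ≤ y 0 ⟨n - 1, by omega⟩ :=
    HK.upper_bound hρ.le y hupd' hM0
  obtain ⟨L, hL1, hL2⟩ := HK.conv_aux hρ y hupd' hmono hM (n - 1) (by omega)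
  have hLmono : ∀ a b, a ≤ b → b ≤ n - 1 → L a ≤ L b := by
    intro a b hab hb
    refine le_of_tendsto_of_tendsto' (hL1 a (hab.trans hb)) (hL1 b hb) ?_
    intro t
    exact hmono t (by simp [Fin.le_def]; omega)
  have claimC : ∀ a b, a ≤ b → b ≤ n - 1 → (L b = L a ∨ ρ < L b - L a) := by
    intro a b hab
    induction b, hab using Nat.le_induction with
    | base => exact fun _ => Or.inl rfl
    | succ b hab ih =>
      intro hb1
      have hd := hL2 b (by omega)
      have hprev := ih (by omega)
      have m2 : L b ≤ L (b + 1) := hLmono b (b + 1) (by omega) hb1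
      have m1 : L a ≤ L b := hLmono a b hab (by omega)
      rcases hd with h1 | h1 <;> rcases hprev with h2 | h2
      · exact Or.inl (h1.trans h2)
      · exact Or.inr (by linarith)
      · exact Or.inr (by linarith [h1.1])
      · exact Or.inr (by linarith [h1.1])
  refine ⟨fun i => L ((σ.symm i : Fin n) : ℕ), ?_, ?_⟩
  · intro i
    have hi : ((σ.symm i : Fin n) : ℕ) ≤ n - 1 := by
      have := (σ.symm i).isLt
      omega
    have htd := hL1 ((σ.symm i : Fin n) : ℕ) hi
    have he : (fun t => y t ⟨((σ.symm i : Fin n) : ℕ), by omega⟩) = fun t => x t i := by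
      funext t
      show (x t ∘ σ) ⟨((σ.symm i : Fin n) : ℕ), _⟩ = x t i
      have : (⟨((σ.symm i : Fin n) : ℕ), by omega⟩ : Fin n) = σ.symm i := Fin.ext rfl
      rw [this]
      simp
    rwa [he] at htd
  · intro i j
    set a := ((σ.symm i : Fin n) : ℕ) with hadef
    set b := ((σ.symm j : Fin n) : ℕ) with hbdef
    have ha : a ≤ n - 1 := by have := (σ.symm i).isLt; omega
    have hb : b ≤ n - 1 := by have := (σ.symm j).isLt; omega
    rcases le_total a b with hab | hab
    · rcases claimC a b hab hb with he | hlt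
      · exact Or.inl he.symm
      · refine Or.inr ?_
        rw [abs_sub_comm, abs_of_nonneg (by linarith)]
        exact hlt
    · rcases claimC b a hab ha with he | hlt
      · exact Or.inl he
      · refine Or.inr ?_
        rw [abs_of_nonneg (by linarith)]
        exact hlt
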